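/- arXiv:1702.04698 — 3 statements merged into one kernel-verified Lean document; each statement's English description precedes it below -/
import Mathlib

section
/- Let μ be a probability measure on ℝⁿ such that |x−y|≤D for all x,y in the support of μ, and define θ_D(x)=|x|²/(4D²) for |x|≤D and θ_D(x)=+∞ for |x|>D. Then for every convex function φ:ℝⁿ→ℝ bounded from below, ∫_{ℝⁿ} e^{Q₁^{θ_D} φ} dμ · ∫_{ℝⁿ} e^{−φ} dμ ≤ 1, where Q₁^{θ_D} φ(x)=inf{φ(y)+θ_D(x−y) : y∈ℝⁿ}. -/
open MeasureTheory ProbabilityTheory Real Set Filter Topology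
open scoped ENNReal NNReal

/-- The support of a measure: the set of points all of whose open neighbourhoods have
positive measure. -/
def msupport {E : Type*} [TopologicalSpace E] [MeasurableSpace E] (μ : Measure E) : Set E :=
  {x | ∀ U : Set E, IsOpen U → x ∈ U → 0 < μ U}

/-- The infimum convolution `Q₁^{θ_D} φ(x) = inf_y {φ(y) + θ_D(x−y)}` where
`θ_D(z) = |z|²/(4D²)` for `|z| ≤ D` and `θ_D(z) = +∞` for `|z| > D`; since `θ_D` is infinite
outside the ball of radius `D`, the infimum is effectively restricted to `‖x − y‖ ≤ D`. -/
noncomputable def QD {E : Type*} [NormedAddCommGroup E] (D : ℝ) (φ : E → ℝ) (x : E) : ℝ :=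
  ⨅ y : {y : E // ‖x - y‖ ≤ D}, (φ (y : E) + ‖x - (y : E)‖ ^ 2 / (4 * D ^ 2))

private lemma exp_poly_bound {u : ℝ} (hu : |u| ≤ 1) :
    Real.exp u ≤ 1 + u + u ^ 2 / 2 + (2 / 9) * |u| ^ 3 := by
  have h := Real.exp_bound hu (n := 3) (by norm_num)
  have hs : ∑ m ∈ Finset.range 3, u ^ m / m.factorial = 1 + u + u ^ 2 / 2 := by
    simp [Finset.sum_range_succ, Nat.factorial]
  rw [hs] at h
  have h1 := (abs_sub_le_iff.1 h).1
  norm_num [Nat.factorial] at h1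
  nlinarith [abs_nonneg u, pow_nonneg (abs_nonneg u) 3]

private lemma lemA {h : ℝ} (h0 : 0 ≤ h) (h1 : h ≤ 1 / 2) :
    Real.exp (h - h ^ 2) + Real.exp (-h) ≤ 2 := by
  have hnn : (0 : ℝ) ≤ h - h ^ 2 := by nlinarith
  have hu1 : |h - h ^ 2| ≤ 1 := by rw [abs_of_nonneg hnn]; nlinarith
  have hu2 : |(-h)| ≤ 1 := by rw [abs_neg, abs_of_nonneg h0]; linarith
  have e1 := exp_poly_bound hu1
  have e2 := exp_poly_bound hu2
  rw [abs_of_nonneg hnn] at e1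
  rw [abs_neg, abs_of_nonneg h0] at e2
  nlinarith [pow_nonneg h0 3, pow_nonneg h0 4, sq_nonneg h, sq_nonneg (1 - h),
    mul_nonneg (mul_nonneg h0 h0) h0, sq_nonneg (h * (1 - h))]

private lemma lemB {h : ℝ} (h1 : 1 / 2 ≤ h) :
    Real.exp (1 / 4 : ℝ) + Real.exp (-h) ≤ 2 := by
  have e1 : Real.exp (1 / 4 : ℝ) ≤ 1.29 := by
    have := exp_poly_bound (u := 1 / 4)
      (by rw [abs_of_nonneg (by norm_num : (0:ℝ) ≤ 1/4)]; norm_num)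
    rw [abs_of_nonneg (by norm_num : (0:ℝ) ≤ 1/4)] at this
    norm_num at this ⊢; linarith
  have e2 : Real.exp (-h) ≤ 0.66 := by
    calc Real.exp (-h) ≤ Real.exp (-(1 / 2)) := Real.exp_le_exp.2 (by linarith)
      _ ≤ 0.66 := by
        have := exp_poly_bound (u := -(1 / 2))
          (by rw [abs_neg, abs_of_nonneg (by norm_num : (0:ℝ) ≤ 1/2)]; norm_num)
        rw [abs_neg, abs_of_nonneg (by norm_num : (0:ℝ) ≤ 1/2)] at this
        norm_num at this ⊢; linarith
  linarith

private lemma scalar {h A B : ℝ} (h0 : 0 ≤ h)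
    (hA : ∀ t : ℝ, 0 ≤ t → t ≤ 1 → A ≤ t * h + (1 - t) ^ 2 / 4)
    (hB : ∀ t : ℝ, 0 ≤ t → t ≤ 1 → B ≤ t * (-h) + (1 - t) ^ 2 / 4) :
    Real.exp A + Real.exp B ≤ 2 := by
  have hBle : B ≤ -h := by have := hB 1 zero_le_one le_rfl; simpa using this
  rcases le_or_gt h (1 / 2) with hc | hc
  · have hAle : A ≤ h - h ^ 2 := by
      have := hA (1 - 2 * h) (by linarith) (by linarith)
      nlinarith
    calc Real.exp A + Real.exp B ≤ Real.exp (h - h ^ 2) + Real.exp (-h) :=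
          add_le_add (Real.exp_le_exp.2 hAle) (Real.exp_le_exp.2 hBle)
      _ ≤ 2 := lemA h0 hc
  · have hAle : A ≤ 1 / 4 := by have := hA 0 le_rfl zero_le_one; nlinarith
    calc Real.exp A + Real.exp B ≤ Real.exp (1 / 4 : ℝ) + Real.exp (-h) :=
          add_le_add (Real.exp_le_exp.2 hAle) (Real.exp_le_exp.2 hBle)
      _ ≤ 2 := lemB hc.le

private lemma msupport_compl_null {E : Type*} [TopologicalSpace E] [MeasurableSpace E]
    [SecondCountableTopology E] (μ : Measure E) :
    μ (msupport μ)ᶜ = 0 := by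
  have hcompl : (msupport μ)ᶜ ⊆ ⋃₀ {U : Set E | IsOpen U ∧ μ U = 0} := by
    intro x hx
    simp only [msupport, mem_compl_iff, mem_setOf_eq, not_forall] at hx
    obtain ⟨U, hUo, hxU, hμ⟩ := hx
    exact ⟨U, ⟨hUo, le_antisymm (not_lt.1 hμ) zero_le⟩, hxU⟩
  obtain ⟨T, hTc, hTS, hTeq⟩ :=
    TopologicalSpace.isOpen_sUnion_countable {U : Set E | IsOpen U ∧ μ U = 0}
      (fun s hs => hs.1)
  have h0 : μ (⋃₀ {U : Set E | IsOpen U ∧ μ U = 0}) = 0 := by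
    rw [← hTeq]
    exact (measure_sUnion_null_iff hTc).2 fun s hs => (hTS hs).2
  exact le_antisymm (h0 ▸ measure_mono hcompl) zero_le

private lemma msupport_nonempty {E : Type*} [TopologicalSpace E] [MeasurableSpace E]
    [SecondCountableTopology E] (μ : Measure E) [IsProbabilityMeasure μ] :
    (msupport μ).Nonempty := by
  by_contra hne
  rw [not_nonempty_iff_eq_empty] at hne
  have h := msupport_compl_null μ
  rw [hne, compl_empty, measure_univ] at h
  exact one_ne_zero h

/-- **Lemma 3.3, first part (after Maurey).** If the support of `μ` has diameter at most `D`,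
then `μ` satisfies the convex infimum convolution inequality with cost
`θ_D(z) = |z|²/(4D²)` for `|z| ≤ D`, `+∞` otherwise. -/
theorem inf_convolution_of_bounded_support
    (n : ℕ) (μ : Measure (EuclideanSpace ℝ (Fin n))) [IsProbabilityMeasure μ]
    (D : ℝ) (hD : 0 < D)
    (hsupp : ∀ x ∈ msupport μ, ∀ y ∈ msupport μ, ‖x - y‖ ≤ D)
    (φ : EuclideanSpace ℝ (Fin n) → ℝ) (hconv : ConvexOn ℝ Set.univ φ)
    (hbdd : BddBelow (Set.range φ)) :
    (∫⁻ x, ENNReal.ofReal (Real.exp (QD D φ x)) ∂μ) *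
      (∫⁻ x, ENNReal.ofReal (Real.exp (-φ x)) ∂μ) ≤ 1 := by
  classical
  obtain ⟨c, hc⟩ := hbdd
  have hcφ : ∀ v, c ≤ φ v := fun v => hc (mem_range_self v)
  have hφcont : Continuous φ :=
    continuousOn_univ.mp (hconv.continuousOn isOpen_univ)
  -- the basic infimum-convolution estimate
  have hQD_le : ∀ x y : EuclideanSpace ℝ (Fin n), ‖x - y‖ ≤ D → ∀ t : ℝ, 0 ≤ t → t ≤ 1 →
      QD D φ x ≤ t * φ x + (1 - t) * φ y + (1 - t) ^ 2 / 4 := by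
    intro x y hxy t ht0 ht1
    have hbb : BddBelow (range fun z : {z : EuclideanSpace ℝ (Fin n) // ‖x - z‖ ≤ D} =>
        φ (z : EuclideanSpace ℝ (Fin n)) + ‖x - (z : EuclideanSpace ℝ (Fin n))‖ ^ 2 / (4 * D ^ 2)) := by
      refine ⟨c, ?_⟩
      rintro _ ⟨z, rfl⟩
      have hnn : (0 : ℝ) ≤ ‖x - (z : EuclideanSpace ℝ (Fin n))‖ ^ 2 / (4 * D ^ 2) := by positivity
      linarith [hcφ (z : EuclideanSpace ℝ (Fin n))]
    have hxz : x - (t • x + (1 - t) • y) = (1 - t) • (x - y) := by module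
    have hz : ‖x - (t • x + (1 - t) • y)‖ ≤ D := by
      rw [hxz, norm_smul, Real.norm_eq_abs, abs_of_nonneg (by linarith : (0:ℝ) ≤ 1 - t)]
      calc (1 - t) * ‖x - y‖ ≤ 1 * D := by
            apply mul_le_mul (by linarith) hxy (norm_nonneg _) zero_le_one
        _ = D := one_mul D
    have hle : QD D φ x ≤ φ (t • x + (1 - t) • y) +
        ‖x - (t • x + (1 - t) • y)‖ ^ 2 / (4 * D ^ 2) :=
      ciInf_le hbb (⟨t • x + (1 - t) • y, hz⟩ :
        {z : EuclideanSpace ℝ (Fin n) // ‖x - z‖ ≤ D})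
    have hφz : φ (t • x + (1 - t) • y) ≤ t * φ x + (1 - t) * φ y :=
      hconv.2 (mem_univ x) (mem_univ y) ht0 (by linarith) (by ring)
    have hnorm : ‖x - (t • x + (1 - t) • y)‖ ^ 2 / (4 * D ^ 2) ≤ (1 - t) ^ 2 / 4 := by
      rw [hxz, norm_smul, Real.norm_eq_abs, abs_of_nonneg (by linarith : (0:ℝ) ≤ 1 - t), mul_pow,
        div_le_div_iff₀ (by positivity) (by norm_num)]
      have h2 : ‖x - y‖ ^ 2 ≤ D ^ 2 := by nlinarith [norm_nonneg (x - y)]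
      nlinarith [sq_nonneg (1 - t)]
    linarith
  -- real-valued symmetrized pointwise bound
  have mainR : ∀ x ∈ msupport μ, ∀ y ∈ msupport μ, φ y ≤ φ x →
      Real.exp (QD D φ x - φ y) + Real.exp (QD D φ y - φ x) ≤ 2 := by
    intro x hx y hy hle
    refine scalar (h := φ x - φ y) (by linarith) ?_ ?_
    · intro t ht0 ht1
      have := hQD_le x y (hsupp x hx y hy) t ht0 ht1
      nlinarith
    · intro t ht0 ht1
      have hyx : ‖y - x‖ ≤ D := by rw [norm_sub_rev]; exact hsupp x hx y hy
      have := hQD_le y x hyx t ht0 ht1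
      nlinarith
  have key : ∀ x ∈ msupport μ, ∀ y ∈ msupport μ,
      ENNReal.ofReal (Real.exp (QD D φ x)) * ENNReal.ofReal (Real.exp (-φ y)) +
        ENNReal.ofReal (Real.exp (QD D φ y)) * ENNReal.ofReal (Real.exp (-φ x)) ≤ 2 := by
    intro x hx y hy
    rw [← ENNReal.ofReal_mul (Real.exp_nonneg _), ← ENNReal.ofReal_mul (Real.exp_nonneg _),
      ← Real.exp_add, ← Real.exp_add, ← ENNReal.ofReal_add (Real.exp_nonneg _) (Real.exp_nonneg _)]
    refine le_trans (ENNReal.ofReal_le_ofReal ?_) (by norm_num : ENNReal.ofReal (2 : ℝ) ≤ 2)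
    rcases le_total (φ y) (φ x) with hle | hle
    · have := mainR x hx y hy hle
      calc Real.exp (QD D φ x + -φ y) + Real.exp (QD D φ y + -φ x)
          = Real.exp (QD D φ x - φ y) + Real.exp (QD D φ y - φ x) := by ring_nf
        _ ≤ 2 := this
    · have := mainR y hy x hx hle
      calc Real.exp (QD D φ x + -φ y) + Real.exp (QD D φ y + -φ x)
          = Real.exp (QD D φ y - φ x) + Real.exp (QD D φ x - φ y) := by ring_nf
        _ ≤ 2 := this
  -- measure-theoretic setup
  have hnull : μ (msupport μ)ᶜ = 0 := msupport_compl_null μ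
  have hae : ∀ᵐ x ∂μ, x ∈ msupport μ := by
    rw [ae_iff]
    exact hnull
  obtain ⟨y₀, hy₀⟩ := msupport_nonempty μ
  set QDf := fun x => ENNReal.ofReal (Real.exp (QD D φ x)) with hQDf
  set Ef := fun x => ENNReal.ofReal (Real.exp (-φ x)) with hEf
  have hEfmeas : Measurable Ef := by
    apply Measurable.ennreal_ofReal
    exact (Real.continuous_exp.comp hφcont.neg).measurable
  set L := ∫⁻ x, QDf x ∂μ with hL
  set M := ∫⁻ x, Ef x ∂μ with hM
  have hMtop : M ≠ ⊤ := by
    have : M ≤ ENNReal.ofReal (Real.exp (-c)) := by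
      rw [hM]
      calc ∫⁻ x, Ef x ∂μ ≤ ∫⁻ _, ENNReal.ofReal (Real.exp (-c)) ∂μ := by
            apply lintegral_mono
            intro x
            exact ENNReal.ofReal_le_ofReal (Real.exp_le_exp.2 (by linarith [hcφ x]))
        _ = ENNReal.ofReal (Real.exp (-c)) := by simp [measure_univ]
    exact ne_top_of_le_ne_top ENNReal.ofReal_ne_top this
  have hLtop : L ≠ ⊤ := by
    have : L ≤ ENNReal.ofReal (Real.exp (φ y₀ + 1 / 4)) := by
      rw [hL]
      calc ∫⁻ x, QDf x ∂μ ≤ ∫⁻ _, ENNReal.ofReal (Real.exp (φ y₀ + 1 / 4)) ∂μ := by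
            apply lintegral_mono_ae
            filter_upwards [hae] with x hx
            have := hQD_le x y₀ (hsupp x hx y₀ hy₀) 0 le_rfl zero_le_one
            apply ENNReal.ofReal_le_ofReal
            apply Real.exp_le_exp.2
            nlinarith
        _ = ENNReal.ofReal (Real.exp (φ y₀ + 1 / 4)) := by simp [measure_univ]
    exact ne_top_of_le_ne_top ENNReal.ofReal_ne_top this
  -- inner bound
  have inner : ∀ x ∈ msupport μ, QDf x * M + Ef x * L ≤ 2 := by
    intro x hx
    have h1 : QDf x * M = ∫⁻ y, QDf x * Ef y ∂μ :=
      (lintegral_const_mul' (QDf x) Ef ENNReal.ofReal_ne_top).symm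
    have h2 : Ef x * L = ∫⁻ y, Ef x * QDf y ∂μ :=
      (lintegral_const_mul' (Ef x) QDf ENNReal.ofReal_ne_top).symm
    rw [h1, h2, ← lintegral_add_left (hEfmeas.const_mul _)]
    calc ∫⁻ y, (QDf x * Ef y + Ef x * QDf y) ∂μ ≤ ∫⁻ _, 2 ∂μ := by
          apply lintegral_mono_ae
          filter_upwards [hae] with y hy
          have := key x hx y hy
          calc QDf x * Ef y + Ef x * QDf y = QDf x * Ef y + QDf y * Ef x := by ring
            _ ≤ 2 := this
      _ = 2 := by simp [measure_univ]
  -- outer bound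
  have houter : L * M + M * L ≤ 2 := by
    have h1 : L * M = ∫⁻ x, QDf x * M ∂μ := (lintegral_mul_const' M QDf hMtop).symm
    have h2 : M * L = ∫⁻ x, Ef x * L ∂μ := (lintegral_mul_const' L Ef hLtop).symm
    rw [h1, h2, ← lintegral_add_right _ (hEfmeas.mul_const L)]
    calc ∫⁻ x, (QDf x * M + Ef x * L) ∂μ ≤ ∫⁻ _, 2 ∂μ := by
          apply lintegral_mono_ae
          filter_upwards [hae] with x hx using inner x hx
      _ = 2 := by simp [measure_univ]
  have h2LM : 2 * (L * M) ≤ 2 * 1 := by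
    rw [two_mul, mul_one]
    calc L * M + L * M = L * M + M * L := by rw [mul_comm M L]
      _ ≤ 2 := houter
  exact (ENNReal.mul_le_mul_iff_right (by norm_num) (by norm_num)).1 h2LM
end

section
/- Let μ be a probability measure on ℝⁿ, let D>0, and define θ_D(x)=|x|²/(4D²) for |x|≤D and θ_D(x)=+∞ for |x|>D. If ∫_{ℝⁿ} e^{Q₁^{θ_D} φ} dμ · ∫_{ℝⁿ} e^{−φ} dμ ≤ 1 holds for every convex function φ:ℝⁿ→ℝ bounded from below, where Q₁^{θ_D} φ(x)=inf{φ(y)+θ_D(x−y) : y∈ℝⁿ}, then the support of μ is bounded and |x−y|≤D for all x,y in the support of μ. -/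
open MeasureTheory ProbabilityTheory Real Set Filter Topology
open scoped ENNReal NNReal

open scoped RealInnerProductSpace

/-- **Lemma 3.3, second part.** Conversely, if the convex infimum convolution inequality
with cost `θ_D` holds for every convex function bounded from below, then the support of `μ`
is bounded and has diameter at most `D`. -/
theorem bounded_support_of_inf_convolution
    (n : ℕ) (μ : Measure (EuclideanSpace ℝ (Fin n))) [IsProbabilityMeasure μ]
    (D : ℝ) (hD : 0 < D)
    (hIC : ∀ φ : EuclideanSpace ℝ (Fin n) → ℝ, ConvexOn ℝ Set.univ φ →
      BddBelow (Set.range φ) →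
      (∫⁻ x, ENNReal.ofReal (Real.exp (QD D φ x)) ∂μ) *
        (∫⁻ x, ENNReal.ofReal (Real.exp (-φ x)) ∂μ) ≤ 1) :
    Bornology.IsBounded (msupport μ) ∧
      ∀ x ∈ msupport μ, ∀ y ∈ msupport μ, ‖x - y‖ ≤ D := by
  have key : ∀ x ∈ msupport μ, ∀ y ∈ msupport μ, ‖x - y‖ ≤ D := by
    intro x₀ hx₀ y₀ hy₀
    by_contra hcon
    push_neg at hcon
    set L : ℝ := ‖x₀ - y₀‖ with hLdef
    have hL0 : 0 < L := hD.trans hcon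
    set v : EuclideanSpace ℝ (Fin n) := (L⁻¹ : ℝ) • (x₀ - y₀) with hv
    have hvnorm : ‖v‖ = 1 := by
      rw [hv, norm_smul, norm_inv, Real.norm_eq_abs, abs_of_pos hL0, ← hLdef]
      field_simp
    have hCS : ∀ z : EuclideanSpace ℝ (Fin n), ⟪v, z⟫ ≤ ‖z‖ := by
      intro z
      have := real_inner_le_norm v z
      rwa [hvnorm, one_mul] at this
    have hvL : ⟪v, x₀ - y₀⟫ = L := by
      rw [hv, real_inner_smul_left, real_inner_self_eq_norm_sq, ← hLdef]
      field_simp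
    set ε : ℝ := (L - D) / 4 with hε
    have hε0 : 0 < ε := by simp only [hε]; linarith
    set c : ℝ := (L - D) / 2 with hc
    have hc0 : 0 < c := by simp only [hc]; linarith
    set s : ℝ := ⟪v, y₀⟫ + ε with hs
    set U₁ := Metric.ball x₀ ε with hU₁
    set U₂ := Metric.ball y₀ ε with hU₂
    have hμ₁ : 0 < μ U₁ := hx₀ _ Metric.isOpen_ball (Metric.mem_ball_self hε0)
    have hμ₂ : 0 < μ U₂ := hy₀ _ Metric.isOpen_ball (Metric.mem_ball_self hε0)
    have hmain : ∀ t : ℝ, 0 ≤ t →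
        ENNReal.ofReal (Real.exp (t * c)) * μ U₁ * μ U₂ ≤ 1 := by
      intro t ht
      set φ : EuclideanSpace ℝ (Fin n) → ℝ := fun x => t • ((⟪v, x⟫ + (-s)) ⊔ 0) with hφ
      have hφconv : ConvexOn ℝ Set.univ φ := by
        refine ConvexOn.smul ht (ConvexOn.sup ?_ (convexOn_const 0 convex_univ))
        have := ((innerSL ℝ v).toLinearMap.convexOn convex_univ).add_const (-s)
        convert this using 2
        all_goals rfl
      have hφ0 : ∀ x, 0 ≤ φ x := fun x => smul_nonneg ht (le_max_right _ _)
      have hφbdd : BddBelow (Set.range φ) := ⟨0, by rintro _ ⟨x, rfl⟩; exact hφ0 x⟩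
      have hφU₂ : ∀ x ∈ U₂, φ x = 0 := by
        intro x hx
        have h1 : ⟪v, x - y₀⟫ ≤ ‖x - y₀‖ := hCS _
        have h2 : ‖x - y₀‖ < ε := by
          rwa [hU₂, Metric.mem_ball, dist_eq_norm] at hx
        have h3 : ⟪v, x⟫ - ⟪v, y₀⟫ ≤ ‖x - y₀‖ := by
          rwa [inner_sub_right] at h1
        have : ⟪v, x⟫ + (-s) ≤ 0 := by simp only [hs]; linarith
        simp only [hφ, max_eq_right this, smul_zero]
      have hQD : ∀ x ∈ U₁, t * c ≤ QD D φ x := by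
        intro x hx
        have hx' : ‖x - x₀‖ < ε := by rwa [hU₁, Metric.mem_ball, dist_eq_norm] at hx
        have : Nonempty {y : EuclideanSpace ℝ (Fin n) // ‖x - y‖ ≤ D} :=
          ⟨⟨x, by simp [hD.le]⟩⟩
        refine le_ciInf ?_
        rintro ⟨y, hy⟩
        have h1 : ⟪v, x - y⟫ ≤ ‖x - y‖ := hCS _
        have h2 : ⟪v, x₀ - x⟫ ≤ ‖x₀ - x‖ := hCS _
        have h3 : ‖x₀ - x‖ = ‖x - x₀‖ := norm_sub_rev _ _
        have h4 : ⟪v, y⟫ - s ≥ c := by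
          have e1 : ⟪v, x⟫ - ⟪v, y⟫ ≤ ‖x - y‖ := by rwa [inner_sub_right] at h1
          have e2 : ⟪v, x₀⟫ - ⟪v, x⟫ ≤ ‖x₀ - x‖ := by rwa [inner_sub_right] at h2
          have e3 : ⟪v, x₀⟫ - ⟪v, y₀⟫ = L := by rw [← hvL, inner_sub_right]
          simp only [hs, hc, hε] at *
          linarith
        have h5 : t * c ≤ φ y := by
          have : c ≤ (⟪v, y⟫ + (-s)) ⊔ 0 := le_trans (by linarith) (le_max_left _ _)
          calc t * c ≤ t * ((⟪v, y⟫ + (-s)) ⊔ 0) := mul_le_mul_of_nonneg_left this ht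
          _ = φ y := rfl
        have h6 : 0 ≤ ‖x - y‖ ^ 2 / (4 * D ^ 2) := by positivity
        linarith
      have hI1 : ENNReal.ofReal (Real.exp (t * c)) * μ U₁ ≤
          ∫⁻ x, ENNReal.ofReal (Real.exp (QD D φ x)) ∂μ := by
        rw [← lintegral_indicator_const Metric.isOpen_ball.measurableSet]
        refine lintegral_mono fun x => ?_
        by_cases hx : x ∈ U₁
        · rw [Set.indicator_of_mem hx]
          exact ENNReal.ofReal_le_ofReal (Real.exp_le_exp.2 (hQD x hx))
        · rw [Set.indicator_of_notMem hx]; exact zero_le'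
      have hI2 : μ U₂ ≤ ∫⁻ x, ENNReal.ofReal (Real.exp (-φ x)) ∂μ := by
        have : μ U₂ = ∫⁻ x, U₂.indicator (fun _ => (1 : ℝ≥0∞)) x ∂μ := by
          rw [lintegral_indicator_const Metric.isOpen_ball.measurableSet, one_mul]
        rw [this]
        refine lintegral_mono fun x => ?_
        by_cases hx : x ∈ U₂
        · rw [Set.indicator_of_mem hx, hφU₂ x hx]
          simp
        · rw [Set.indicator_of_notMem hx]; exact zero_le'
      calc ENNReal.ofReal (Real.exp (t * c)) * μ U₁ * μ U₂
          ≤ (∫⁻ x, ENNReal.ofReal (Real.exp (QD D φ x)) ∂μ) *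
            (∫⁻ x, ENNReal.ofReal (Real.exp (-φ x)) ∂μ) := mul_le_mul' hI1 hI2
        _ ≤ 1 := hIC φ hφconv hφbdd
    -- derive contradiction
    set a : ℝ := (μ U₁).toReal with ha
    set b : ℝ := (μ U₂).toReal with hb
    have ha0 : 0 < a := ENNReal.toReal_pos hμ₁.ne' (measure_ne_top μ _)
    have hb0 : 0 < b := ENNReal.toReal_pos hμ₂.ne' (measure_ne_top μ _)
    set t : ℝ := max 0 ((Real.log (1 / (a * b)) + 1) / c) with htdef
    have ht0 : 0 ≤ t := le_max_left _ _
    have htc : Real.log (1 / (a * b)) + 1 ≤ t * c := by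
      have : (Real.log (1 / (a * b)) + 1) / c ≤ t := le_max_right _ _
      calc Real.log (1 / (a * b)) + 1 = ((Real.log (1 / (a * b)) + 1) / c) * c := by
            field_simp
        _ ≤ t * c := mul_le_mul_of_nonneg_right this hc0.le
    have h1 := hmain t ht0
    rw [← ENNReal.ofReal_toReal (measure_ne_top μ U₁), ← ENNReal.ofReal_toReal (measure_ne_top μ U₂),
      ← ha, ← hb, ← ENNReal.ofReal_mul (Real.exp_pos _).le, ← ENNReal.ofReal_mul (by positivity)] at h1
    have h2 : Real.exp (t * c) * a * b ≤ 1 := by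
      by_contra h3
      push_neg at h3
      exact absurd h1 (not_le.2 (ENNReal.one_lt_ofReal.2 h3))
    have h4 : Real.exp (t * c) ≤ 1 / (a * b) := by
      rw [le_div_iff₀ (by positivity)]
      linarith [h2, mul_assoc (Real.exp (t * c)) a b]
    have h5 : t * c ≤ Real.log (1 / (a * b)) := by
      have := Real.log_le_log (Real.exp_pos _) h4
      rwa [Real.log_exp] at this
    linarith
  refine ⟨?_, key⟩
  rcases Set.eq_empty_or_nonempty (msupport μ) with h | ⟨z, hz⟩
  · simp [h]
  · refine (Metric.isBounded_closedBall (x := z) (r := D)).subset fun x hx => ?_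
    rw [Metric.mem_closedBall, dist_eq_norm]
    exact key x hx z hz
end

section
/- Let μ be a symmetric probability measure on ℝ with a nowhere vanishing density, and let θ:[0,∞)→[0,∞) be convex with θ(t)=t² on [0,t₀]. Then for all x,h ≥ 0 one has μ([U_μ(x+h),∞)) = e^{−h}·μ([U_μ(x),∞)). Consequently, if there exists b>0 such that Δ_μ(h) ≤ (1/b)·θ^{-1}(t₀²+h) for all h>0, then, with g(h):=(1/b)·θ^{-1}(t₀²+h), one has μ([x+g(h),∞)) ≤ e^{−h}·μ([x,∞)) for all x ≥ 0 and h > 0. -/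
open MeasureTheory ProbabilityTheory Real Set Filter Topology
open scoped ENNReal NNReal

/-- The generalized inverse `F_μ^{-1}(t) = inf {y : F_μ(y) ≥ t}` of the cumulative
distribution function `F_μ(y) = μ((-∞, y])`. -/
noncomputable def invCDF (μ : Measure ℝ) (t : ℝ) : ℝ :=
  sInf {y : ℝ | t ≤ (μ (Iic y)).toReal}

/-- The cumulative distribution function of the symmetric exponential measure `τ`
with density `(1/2) e^{-|x|}`. -/
noncomputable def expCDF (x : ℝ) : ℝ :=
  if x < 0 then Real.exp x / 2 else 1 - Real.exp (-x) / 2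

/-- `U_μ = F_μ^{-1} ∘ F_τ`, the unique left-continuous non-decreasing map
transporting `τ` onto `μ`. -/
noncomputable def Umap (μ : Measure ℝ) (x : ℝ) : ℝ :=
  invCDF μ (expCDF x)

open scoped Classical in
/-- `Ent_μ(g) = ∫ g ln g dμ − (∫ g dμ) ln (∫ g dμ)` if `∫ g ln g dμ < ∞`, and `+∞`
otherwise (for nonnegative `g` this quantity is nonnegative, so it is recorded in `ℝ≥0∞`). -/
noncomputable def Ent (μ : Measure ℝ) (g : ℝ → ℝ) : ℝ≥0∞ :=
  if Integrable (fun x => g x * Real.log (g x)) μ then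
    ENNReal.ofReal ((∫ x, g x * Real.log (g x) ∂μ) -
      (∫ x, g x ∂μ) * Real.log (∫ x, g x ∂μ))
  else ⊤

open scoped Classical in
/-- The relative entropy `H(ν|μ) = ∫ log (dν/dμ) dν`, `+∞` if `ν` is not absolutely
continuous w.r.t. `μ` (for probability measures it is nonnegative, hence valued in `ℝ≥0∞`). -/
noncomputable def relEnt {α : Type*} [MeasurableSpace α] (ν μ : Measure α) : ℝ≥0∞ :=
  if ν ≪ μ ∧ Integrable (fun x => Real.log ((ν.rnDeriv μ x).toReal)) ν then
    ENNReal.ofReal (∫ x, Real.log ((ν.rnDeriv μ x).toReal) ∂ν)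
  else ⊤

/-- The weak (barycentric) transport cost
`T̄_θ(μ₂|μ₁) = inf_π ∫ θ(|x − ∫ y p(x,dy)|) μ₁(dx)`, the infimum running over all
couplings `π(dxdy) = p(x,dy) μ₁(dx)` of `μ₁` and `μ₂` (described by their
disintegration kernels `p`). -/
noncomputable def weakCost (θ : ℝ → ℝ) (μ₂ μ₁ : Measure ℝ) : ℝ≥0∞ :=
  ⨅ (p : Kernel ℝ ℝ) (_ : IsMarkovKernel p) (_ : μ₁.bind (fun x => p x) = μ₂),
    ∫⁻ x, ENNReal.ofReal (θ |x - ∫ y, y ∂(p x)|) ∂μ₁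

/-- `μ` satisfies `T̄⁻(θ)`: `T̄_θ(μ|ν) ≤ H(ν|μ)` for every probability measure `ν`
with finite first moment. -/
def Tminus (θ : ℝ → ℝ) (μ : Measure ℝ) : Prop :=
  ∀ ν : Measure ℝ, IsProbabilityMeasure ν → Integrable (fun x => x) ν →
    weakCost θ μ ν ≤ relEnt ν μ

/-- `μ` satisfies `T̄⁺(θ)`: `T̄_θ(ν|μ) ≤ H(ν|μ)` for every probability measure `ν`
with finite first moment. -/
def Tplus (θ : ℝ → ℝ) (μ : Measure ℝ) : Prop :=
  ∀ ν : Measure ℝ, IsProbabilityMeasure ν → Integrable (fun x => x) ν →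
    weakCost θ ν μ ≤ relEnt ν μ

/-- The inverse of an increasing cost function `θ` on `[0,∞)`:
`θ⁻¹(u) = inf {t ≥ 0 : θ(t) ≥ u}`. -/
noncomputable def cinv (θ : ℝ → ℝ) (u : ℝ) : ℝ :=
  sInf {t : ℝ | 0 ≤ t ∧ u ≤ θ t}


set_option linter.unusedSectionVars false

section Aux
variable {μ : Measure ℝ} [IsProbabilityMeasure μ]
variable {ρ : ℝ → ℝ} (hρmeas : Measurable ρ) (hρpos : ∀ x, 0 < ρ x)
variable (hμρ : μ = volume.withDensity fun x => ENNReal.ofReal (ρ x))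

include hμρ in
lemma aux_atom (a : ℝ) : μ {a} = 0 := by
  rw [hμρ]; exact withDensity_absolutelyContinuous _ _ (measure_singleton a)

include hρmeas hρpos hμρ in
lemma aux_pos {s : Set ℝ} (hs : MeasurableSet s) (hvs : volume s ≠ 0) : 0 < μ s := by
  rw [hμρ, pos_iff_ne_zero, Ne, withDensity_apply_eq_zero (by measurability)]
  intro h
  apply hvs
  have : {x | ENNReal.ofReal (ρ x) ≠ 0} ∩ s = s := by
    ext x; simp [ne_eq, ENNReal.ofReal_eq_zero, not_le, hρpos x]
  rwa [this] at h

include hρmeas hρpos hμρ in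
lemma aux_integrable : Integrable ρ volume := by
  refine ⟨hρmeas.aestronglyMeasurable, ?_⟩
  rw [hasFiniteIntegral_iff_ofReal (Eventually.of_forall fun x => (hρpos x).le)]
  have : (∫⁻ x, ENNReal.ofReal (ρ x)) = μ univ := by
    rw [hμρ, withDensity_apply _ MeasurableSet.univ, Measure.restrict_univ]
  rw [this, measure_univ]; exact ENNReal.one_lt_top

include hρmeas hρpos hμρ in
lemma aux_setint {s : Set ℝ} (hs : MeasurableSet s) :
    (μ s).toReal = ∫ x in s, ρ x := by
  rw [hμρ, withDensity_apply _ hs]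
  rw [integral_eq_lintegral_of_nonneg_ae (Eventually.of_forall fun x => (hρpos x).le)
    hρmeas.aestronglyMeasurable.restrict]

include hρmeas hρpos hμρ in
lemma aux_F_cont : Continuous fun y => (μ (Iic y)).toReal := by
  have hint := aux_integrable hρmeas hρpos hμρ
  have key : ∀ y, (μ (Iic y)).toReal = (μ (Iic 0)).toReal + ∫ x in (0:ℝ)..y, ρ x := by
    intro y
    rcases le_or_gt 0 y with hy | hy
    · have hu : Iic 0 ∪ Ioc 0 y = Iic y := Iic_union_Ioc_eq_Iic hy
      have : μ (Iic y) = μ (Iic 0) + μ (Ioc 0 y) := by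
        rw [← hu, measure_union (Iic_disjoint_Ioc le_rfl) measurableSet_Ioc]
      rw [this, ENNReal.toReal_add (measure_ne_top μ _) (measure_ne_top μ _),
        aux_setint hρmeas hρpos hμρ measurableSet_Ioc,
        intervalIntegral.integral_of_le hy]
    · have hu : Iic y ∪ Ioc y 0 = Iic 0 := Iic_union_Ioc_eq_Iic hy.le
      have h0 : μ (Iic 0) = μ (Iic y) + μ (Ioc y 0) := by
        rw [← hu, measure_union (Iic_disjoint_Ioc le_rfl) measurableSet_Ioc]
      rw [intervalIntegral.integral_symm, intervalIntegral.integral_of_le hy.le,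
        ← aux_setint hρmeas hρpos hμρ measurableSet_Ioc]
      rw [h0, ENNReal.toReal_add (measure_ne_top μ _) (measure_ne_top μ _)]
      ring
  have heq : (fun y => (μ (Iic y)).toReal)
      = fun y => (μ (Iic 0)).toReal + ∫ x in (0:ℝ)..y, ρ x := funext key
  rw [heq]
  exact continuous_const.add (hint.continuous_primitive 0)

include hρmeas hρpos hμρ in
lemma aux_F_strictMono : StrictMono fun y => (μ (Iic y)).toReal := by
  intro a b hab
  have hu : Iic a ∪ Ioc a b = Iic b := Iic_union_Ioc_eq_Iic hab.le
  have h1 : μ (Iic b) = μ (Iic a) + μ (Ioc a b) := by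
    rw [← hu, measure_union (Iic_disjoint_Ioc le_rfl) measurableSet_Ioc]
  have h2 : 0 < μ (Ioc a b) := by
    refine aux_pos hρmeas hρpos hμρ measurableSet_Ioc ?_
    rw [Real.volume_Ioc]
    simp only [ne_eq, ENNReal.ofReal_eq_zero, not_le]
    linarith
  have h3 := ENNReal.toReal_pos h2.ne' (measure_ne_top μ _)
  simp only []
  rw [h1, ENNReal.toReal_add (measure_ne_top μ _) (measure_ne_top μ _)]
  linarith

include hμρ in
lemma aux_sum (y : ℝ) : (μ (Iic y)).toReal + (μ (Ici y)).toReal = 1 := by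
  have h2 : μ (Iio y) = μ (Iic y) := by
    rw [← Iic_diff_right, measure_diff_null (aux_atom hμρ y)]
  have h1 : μ (Iio y) + μ (Ici y) = 1 := by
    rw [← measure_union (Iio_disjoint_Ici le_rfl) measurableSet_Ici,
      Iio_union_Ici, measure_univ]
  rw [h2] at h1
  have := congrArg ENNReal.toReal h1
  rwa [ENNReal.toReal_add (measure_ne_top μ _) (measure_ne_top μ _), ENNReal.toReal_one] at this

include hμρ in
lemma aux_Ici (y : ℝ) : μ (Ici y) = ENNReal.ofReal (1 - (μ (Iic y)).toReal) := by
  have h := aux_sum hμρ y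
  have : 1 - (μ (Iic y)).toReal = (μ (Ici y)).toReal := by linarith
  rw [this, ENNReal.ofReal_toReal (measure_ne_top μ _)]

include hρmeas hρpos hμρ in
lemma aux_F_lt_one (y : ℝ) : (μ (Iic y)).toReal < 1 := by
  have h2 : 0 < μ (Ioi y) := by
    refine aux_pos hρmeas hρpos hμρ measurableSet_Ioi ?_
    simp [Real.volume_Ioi]
  have h3 : 0 < (μ (Ici y)).toReal :=
    ENNReal.toReal_pos (lt_of_lt_of_le h2 (measure_mono Ioi_subset_Ici_self)).ne'
      (measure_ne_top μ _)
  have := aux_sum hμρ y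
  linarith

include hρmeas hρpos hμρ in
lemma aux_F_pos (y : ℝ) : 0 < (μ (Iic y)).toReal := by
  have h2 : 0 < μ (Iic y) := by
    refine aux_pos hρmeas hρpos hμρ measurableSet_Iic ?_
    simp [Real.volume_Iic]
  exact ENNReal.toReal_pos h2.ne' (measure_ne_top μ _)

end Aux

section Aux2
variable {μ : Measure ℝ} [IsProbabilityMeasure μ]
variable {ρ : ℝ → ℝ} (hρmeas : Measurable ρ) (hρpos : ∀ x, 0 < ρ x)
variable (hρsymm : ∀ x, ρ (-x) = ρ x)
variable (hμρ : μ = volume.withDensity fun x => ENNReal.ofReal (ρ x))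

include hρmeas hρsymm hμρ in
lemma aux_F0 : (μ (Iic 0)).toReal = 1/2 := by
  have hmeasf : Measurable fun x => ENNReal.ofReal (ρ x) := by measurability
  have h : μ (Iic 0) = μ (Ici 0) := by
    rw [hμρ, withDensity_apply _ measurableSet_Iic, withDensity_apply _ measurableSet_Ici,
      ← lintegral_indicator measurableSet_Iic,
      ← lintegral_indicator measurableSet_Ici]
    have hcomp := (Measure.measurePreserving_neg (volume : Measure ℝ)).lintegral_comp
      (f := (Iic (0:ℝ)).indicator fun x => ENNReal.ofReal (ρ x))
      (hmeasf.indicator measurableSet_Iic)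
    rw [← hcomp]
    congr 1
    funext x
    rcases le_or_gt 0 x with hx | hx
    · rw [Set.indicator_of_mem (mem_Iic.2 (neg_nonpos.2 hx)),
        Set.indicator_of_mem (mem_Ici.2 hx), hρsymm]
    · rw [Set.indicator_of_notMem (by simp [mem_Iic]; linarith),
        Set.indicator_of_notMem (by simp [mem_Ici]; linarith)]
  have hs := aux_sum hμρ 0
  rw [← h] at hs
  linarith

include hρmeas hρpos hμρ in
lemma aux_invCDF (y : ℝ) : invCDF μ ((μ (Iic y)).toReal) = y := by
  have hsm := aux_F_strictMono hρmeas hρpos hμρ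
  have : {z : ℝ | (μ (Iic y)).toReal ≤ (μ (Iic z)).toReal} = Ici y := by
    ext z
    simp only [mem_setOf_eq, mem_Ici]
    constructor
    · intro hz
      by_contra hc
      push_neg at hc
      exact absurd hz (not_le.2 (hsm hc))
    · intro hz
      exact hsm.monotone hz
  rw [invCDF, this, csInf_Ici]

include hρmeas hρpos hρsymm hμρ in
lemma aux_exists {t : ℝ} (ht1 : 1/2 ≤ t) (ht2 : t < 1) :
    ∃ y, (μ (Iic y)).toReal = t := by
  have hcont := aux_F_cont hρmeas hρpos hμρ
  have hsm := aux_F_strictMono hρmeas hρpos hμρ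
  have hF0 := aux_F0 hρmeas hρsymm hμρ
  have ha : (μ (Iic (-1:ℝ))).toReal < t := lt_of_lt_of_le (by rw [← hF0] at ht1 ⊢; exact hsm (by norm_num)) ht1
  have htop : Tendsto (fun b => (μ (Iic b)).toReal) atTop (𝓝 1) := by
    have h1 := tendsto_measure_Iic_atTop (μ := μ)
    rw [measure_univ] at h1
    have := (ENNReal.tendsto_toReal (by norm_num : (1:ℝ≥0∞) ≠ ⊤)).comp h1
    simpa [Function.comp_def] using this
  obtain ⟨b, hb⟩ := (htop.eventually (eventually_gt_nhds ht2)).exists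
  have hab : (-1:ℝ) ≤ b := by
    by_contra hc
    push_neg at hc
    exact absurd (hsm hc) (by linarith)
  have := intermediate_value_Icc hab hcont.continuousOn
  obtain ⟨y, _, hy⟩ := this ⟨ha.le, hb.le⟩
  exact ⟨y, hy⟩

include hρmeas hρpos hρsymm hμρ in
lemma aux_tail : ∀ x ≥ (0:ℝ), μ (Ici (Umap μ x)) = ENNReal.ofReal (Real.exp (-x) / 2) := by
  intro x hx
  have ht : expCDF x = 1 - Real.exp (-x) / 2 := if_neg (not_lt.2 hx)
  have hexp1 : Real.exp (-x) ≤ 1 := Real.exp_le_one_iff.2 (by linarith)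
  have hexp0 : 0 < Real.exp (-x) := Real.exp_pos _
  obtain ⟨y, hy⟩ := aux_exists hρmeas hρpos hρsymm hμρ
    (t := 1 - Real.exp (-x) / 2) (by linarith) (by linarith)
  have hU : Umap μ x = y := by
    rw [Umap, ht, ← hy, aux_invCDF hρmeas hρpos hμρ]
  rw [hU, aux_Ici hμρ, hy]
  congr 1
  ring

end Aux2

/-- **Remark 1.5.** For a symmetric probability measure `μ` with a nowhere vanishing density
`ρ` one has `μ([U_μ(x+h),∞)) = e^{−h} μ([U_μ(x),∞))` for `x, h ≥ 0`; consequently, if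
`Δ_μ(h) ≤ (1/b) θ⁻¹(t₀² + h)`, then with `g(h) = (1/b) θ⁻¹(t₀² + h)` one has
`μ([x + g(h), ∞)) ≤ e^{−h} μ([x,∞))` for all `x ≥ 0`, `h > 0`. -/
theorem tail_condition_of_deltaCondition
    (θ : ℝ → ℝ) (t₀ : ℝ) (ht₀ : 0 < t₀)
    (hθnn : ∀ t ≥ (0:ℝ), 0 ≤ θ t)
    (hθconv : ConvexOn ℝ (Set.Ici 0) θ)
    (hθquad : ∀ t ∈ Set.Icc (0:ℝ) t₀, θ t = t ^ 2)
    (μ : Measure ℝ) [IsProbabilityMeasure μ]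
    (ρ : ℝ → ℝ) (hρmeas : Measurable ρ) (hρpos : ∀ x, 0 < ρ x)
    (hρsymm : ∀ x, ρ (-x) = ρ x)
    (hμρ : μ = volume.withDensity fun x => ENNReal.ofReal (ρ x)) :
    (∀ x ≥ (0:ℝ), ∀ h ≥ (0:ℝ),
      μ (Set.Ici (Umap μ (x + h))) =
        ENNReal.ofReal (Real.exp (-h)) * μ (Set.Ici (Umap μ x))) ∧
    (∀ b > (0:ℝ),
      (∀ h > (0:ℝ), ∀ x : ℝ,
        Umap μ (x + h) - Umap μ x ≤ (1 / b) * cinv θ (t₀ ^ 2 + h)) →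
      ∀ x ≥ (0:ℝ), ∀ h > (0:ℝ),
        μ (Set.Ici (x + (1 / b) * cinv θ (t₀ ^ 2 + h))) ≤
          ENNReal.ofReal (Real.exp (-h)) * μ (Set.Ici x)) := by
  have part1 : ∀ x ≥ (0:ℝ), ∀ h ≥ (0:ℝ),
      μ (Set.Ici (Umap μ (x + h))) =
        ENNReal.ofReal (Real.exp (-h)) * μ (Set.Ici (Umap μ x)) := by
    intro x hx h hh
    rw [aux_tail hρmeas hρpos hρsymm hμρ (x + h) (by linarith),
      aux_tail hρmeas hρpos hρsymm hμρ x hx,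
      ← ENNReal.ofReal_mul (Real.exp_nonneg _)]
    congr 1
    rw [neg_add, Real.exp_add]
    ring
  refine ⟨part1, ?_⟩
  intro b hb Hb x hx h hh
  set t : ℝ := (μ (Iic x)).toReal with htdef
  have hF0 := aux_F0 hρmeas hρsymm hμρ
  have hsm := aux_F_strictMono hρmeas hρpos hμρ
  have ht1 : 1/2 ≤ t := by
    rw [← hF0]
    exact hsm.monotone hx
  have ht2 : t < 1 := aux_F_lt_one hρmeas hρpos hμρ x
  have pos2t : 0 < 2 * (1 - t) := by linarith
  set x' : ℝ := -Real.log (2 * (1 - t)) with hx'def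
  have hx' : 0 ≤ x' := by
    rw [hx'def, neg_nonneg]
    exact Real.log_nonpos pos2t.le (by linarith)
  have hexp : expCDF x' = t := by
    rw [expCDF, if_neg (not_lt.2 hx'), hx'def, neg_neg, Real.exp_log pos2t]
    ring
  have hU : Umap μ x' = x := by
    rw [Umap, hexp, htdef, aux_invCDF hρmeas hρpos hμρ]
  have hle : Umap μ (x' + h) ≤ x + 1 / b * cinv θ (t₀ ^ 2 + h) := by
    have := Hb h hh x'
    rw [hU] at this
    linarith
  calc μ (Set.Ici (x + 1 / b * cinv θ (t₀ ^ 2 + h)))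
      ≤ μ (Set.Ici (Umap μ (x' + h))) := measure_mono (Ici_subset_Ici.2 hle)
    _ = ENNReal.ofReal (Real.exp (-h)) * μ (Set.Ici (Umap μ x')) := part1 x' hx' h hh.le
    _ = ENNReal.ofReal (Real.exp (-h)) * μ (Set.Ici x) := by rw [hU]
end
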